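/- arXiv:1311.0244 — 5 statements merged into one kernel-verified Lean document; each statement's English description precedes it below -/
import Mathlib

section
/- Let G be a connected undirected graph in which every node has degree at least k. Then G has at least k+1 noncritical nodes, i.e., at least k+1 vertices whose removal (together with their incident edges) leaves a connected graph. -/
open SimpleGraph

/-- The graph obtained from `G` by isolating the vertex `c`. -/
def Del {V : Type*} (G : SimpleGraph V) (c : V) : SimpleGraph V where
  Adj x y := G.Adj x y ∧ x ≠ c ∧ y ≠ c
  symm := ⟨fun x y ⟨h, hx, hy⟩ => ⟨h.symm, hy, hx⟩⟩
  loopless := ⟨fun x ⟨h, _, _⟩ => G.loopless.irrefl x h⟩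

/-- A vertex is *noncritical* if deleting it (and its incident edges)
leaves a connected graph. -/
def Noncritical {V : Type*} (G : SimpleGraph V) (v : V) : Prop :=
  (G.induce ({v}ᶜ : Set V)).Connected

/-- `A` is the vertex set of a connected component of `G - c`. -/
def IsCompOf {V : Type*} (G : SimpleGraph V) (c : V) (A : Set V) : Prop :=
  c ∉ A ∧ A.Nonempty ∧ (∀ x ∈ A, ∀ y, G.Adj x y → y ≠ c → y ∈ A) ∧
    ∀ x ∈ A, ∀ y ∈ A, (Del G c).Reachable x y

lemma walk_lift {V : Type*} {G : SimpleGraph V} {c : V} :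
    ∀ {x y : V}, (Del G c).Walk x y → ∀ (hx : x ≠ c) (hy : y ≠ c),
      (G.induce ({c}ᶜ : Set V)).Reachable ⟨x, hx⟩ ⟨y, hy⟩ := by
  intro x y p
  induction p with
  | nil => intro hx hy; rfl
  | cons h p ih =>
    intro hx hy
    obtain ⟨hadj, hx', hz⟩ := h
    exact (SimpleGraph.Adj.reachable (show (G.induce ({c}ᶜ : Set V)).Adj ⟨_, hx⟩ ⟨_, hz⟩ from hadj)).trans (ih hz hy)

lemma exists_disc {V : Type*} {G : SimpleGraph V} {c : V}
    (hc : ¬ Noncritical G c) (hne : ∃ x : V, x ≠ c) :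
    ∃ x y, x ≠ c ∧ y ≠ c ∧ ¬ (Del G c).Reachable x y := by
  by_contra h
  push_neg at h
  apply hc
  rw [Noncritical, SimpleGraph.connected_iff]
  obtain ⟨x0, hx0⟩ := hne
  refine ⟨?_, ⟨⟨x0, hx0⟩⟩⟩
  rintro ⟨x, hx⟩ ⟨y, hy⟩
  obtain ⟨p⟩ := h x y hx hy
  exact walk_lift p hx hy

/-- Any walk from outside a component `A` of `G - c` to inside must pass
through `c` before entering `A`; hence the start is reachable to `c`
avoiding any fixed `a ∈ A`. -/
lemma exit_lemma {V : Type*} {G : SimpleGraph V} {c : V} {A : Set V}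
    (hcA : c ∉ A) (hclose : ∀ x ∈ A, ∀ y, G.Adj x y → y ≠ c → y ∈ A)
    {a : V} (ha : a ∈ A) :
    ∀ {w t : V}, G.Walk w t → w ∉ A → t ∈ A → (Del G a).Reachable w c := by
  intro w t p
  induction p with
  | nil => intro hw ht; exact absurd ht hw
  | @cons w u t h p ih =>
    intro hw ht
    by_cases hu : u = c
    · subst hu
      exact SimpleGraph.Adj.reachable
        ⟨h, fun hwa => hw (hwa ▸ ha), fun hca => hcA (hca ▸ ha)⟩
    · by_cases hwc : w = c
      · exact hwc ▸ SimpleGraph.Reachable.refl (G := Del G a) c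
      · have hu' : u ∉ A := fun huA => hw (hclose u huA w h.symm hwc)
        exact (SimpleGraph.Adj.reachable
          (show (Del G a).Adj w u from
            ⟨h, fun hwa => hw (hwa ▸ ha), fun hua => hu' (hua ▸ ha)⟩)).trans (ih hu' ht)

/-- If `A` is a component of `G - c` and `a ∈ A` is a cut vertex,
then some component of `G - a` is strictly inside `A`. -/
lemma shrink {V : Type*} [Fintype V] {G : SimpleGraph V} (hconn : G.Connected)
    {c : V} {A : Set V} (h : IsCompOf G c A) {a : V} (ha : a ∈ A)
    (hcut : ¬ Noncritical G a) :
    ∃ B, IsCompOf G a B ∧ B ⊆ A ∧ B.ncard < A.ncard := by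
  obtain ⟨hcA, hAne, hclose, hreach⟩ := h
  have hca : c ≠ a := fun hca => hcA (hca ▸ ha)
  obtain ⟨x, y, hx, hy, hxy⟩ := exists_disc hcut ⟨c, hca⟩
  -- pick z not reachable to c in G - a
  obtain ⟨z, hz, hzc⟩ : ∃ z, z ≠ a ∧ ¬ (Del G a).Reachable z c := by
    by_cases hxc : (Del G a).Reachable x c
    · exact ⟨y, hy, fun hyc => hxy (hxc.trans hyc.symm)⟩
    · exact ⟨x, hx, hxc⟩
  refine ⟨{w | w ≠ a ∧ (Del G a).Reachable z w}, ?_, ?_, ?_⟩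
  · refine ⟨fun h => h.1 rfl, ⟨z, hz, SimpleGraph.Reachable.refl z⟩, ?_, ?_⟩
    · rintro w ⟨hwa, hzw⟩ y' hadj hy'
      exact ⟨hy', hzw.trans (SimpleGraph.Adj.reachable ⟨hadj, hwa, hy'⟩)⟩
    · rintro w ⟨_, hzw⟩ w' ⟨_, hzw'⟩
      exact hzw.symm.trans hzw'
  · rintro w ⟨hwa, hzw⟩
    by_contra hwA
    obtain ⟨p⟩ : G.Reachable w a := hconn w a
    exact hzc (hzw.trans (exit_lemma hcA hclose ha p hwA ha))
  · apply Set.ncard_lt_ncard _ (Set.toFinite A)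
    constructor
    · rintro w ⟨hwa, hzw⟩
      by_contra hwA
      obtain ⟨p⟩ : G.Reachable w a := hconn w a
      exact hzc (hzw.trans (exit_lemma hcA hclose ha p hwA ha))
    · intro hsub
      exact (hsub ha).1 rfl

lemma comp_size {V : Type*} [Fintype V] [DecidableEq V] {G : SimpleGraph V}
    [DecidableRel G.Adj] {k : ℕ} (hdeg : ∀ v : V, k ≤ G.degree v)
    {c : V} {A : Set V} (h : IsCompOf G c A) : k ≤ A.ncard := by
  obtain ⟨hcA, ⟨a, ha⟩, hclose, -⟩ := h
  have hsub : G.neighborSet a ⊆ insert c A \ {a} := by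
    intro y hy
    have hy' : G.Adj a y := hy
    constructor
    · by_cases hyc : y = c
      · exact hyc ▸ Set.mem_insert c A
      · exact Set.mem_insert_of_mem c (hclose a ha y hy' hyc)
    · exact fun hya => G.loopless.irrefl a (by simpa [Set.mem_singleton_iff.mp hya] using hy')
  have h1 : k ≤ (G.neighborSet a).ncard := by
    rw [Set.ncard_eq_toFinset_card']
    have he : (G.neighborSet a).toFinset = G.neighborFinset a := by ext; simp
    rw [he]
    exact hdeg a
  have h2 : (G.neighborSet a).ncard ≤ (insert c A \ {a}).ncard :=
    Set.ncard_le_ncard hsub (Set.toFinite _)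
  have h3 : (insert c A \ {a}).ncard + 1 = (insert c A).ncard :=
    Set.ncard_diff_singleton_add_one (Set.mem_insert_of_mem c ha) (Set.toFinite _)
  have h4 : (insert c A).ncard = A.ncard + 1 := Set.ncard_insert_of_notMem hcA (Set.toFinite _)
  omega

/-- Minimal components consist of noncritical vertices. -/
lemma min_comp {V : Type*} [Fintype V] {G : SimpleGraph V} (hconn : G.Connected)
    {S : Set V} (hS : ∃ c A, IsCompOf G c A ∧ A ⊆ S) :
    ∃ c A, IsCompOf G c A ∧ A ⊆ S ∧ ∀ a ∈ A, Noncritical G a := by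
  set T : Set ℕ := {n | ∃ c A, IsCompOf G c A ∧ A ⊆ S ∧ A.ncard = n} with hT
  have hTne : T.Nonempty := by
    obtain ⟨c, A, h1, h2⟩ := hS
    exact ⟨A.ncard, c, A, h1, h2, rfl⟩
  obtain ⟨c, A, h1, h2, h3⟩ := Nat.sInf_mem hTne
  refine ⟨c, A, h1, h2, fun a ha => ?_⟩
  by_contra hcut
  obtain ⟨B, hB, hBA, hlt⟩ := shrink hconn h1 ha hcut
  have : B.ncard ∈ T := ⟨a, B, hB, hBA.trans h2, rfl⟩
  have := Nat.sInf_le this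
  omega

theorem noncritical_count {V : Type*} [Fintype V] [DecidableEq V]
    (G : SimpleGraph V) [DecidableRel G.Adj] (k : ℕ)
    (hconn : G.Connected) (hk : 1 ≤ k)
    (hdeg : ∀ v : V, k ≤ G.degree v) :
    k + 1 ≤ {v : V | Noncritical G v}.ncard := by
  have hne : Nonempty V := hconn.nonempty
  obtain ⟨v0⟩ := hne
  have hcard : k + 1 ≤ Fintype.card V := by
    have := SimpleGraph.degree_lt_card_verts (G := G) v0
    have := hdeg v0
    omega
  by_cases hall : ∀ v, Noncritical G v
  · have : {v : V | Noncritical G v} = Set.univ := Set.eq_univ_of_forall hall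
    rw [this, Set.ncard_univ, Nat.card_eq_fintype_card]
    exact hcard
  push_neg at hall
  obtain ⟨c0, hc0⟩ := hall
  have hne0 : ∃ x : V, x ≠ c0 := by
    obtain ⟨x, hx⟩ := Fintype.exists_ne_of_one_lt_card (by omega) c0
    exact ⟨x, hx⟩
  obtain ⟨x, y, hx, hy, hxy⟩ := exists_disc hc0 hne0
  set A1' : Set V := {w | w ≠ c0 ∧ (Del G c0).Reachable x w} with hA1'
  set A2' : Set V := {w | w ≠ c0 ∧ (Del G c0).Reachable y w} with hA2'
  have hcomp1 : IsCompOf G c0 A1' := by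
    refine ⟨fun h => h.1 rfl, ⟨x, hx, SimpleGraph.Reachable.refl x⟩, ?_, ?_⟩
    · rintro w ⟨hwc, hxw⟩ y' hadj hy'
      exact ⟨hy', hxw.trans (SimpleGraph.Adj.reachable ⟨hadj, hwc, hy'⟩)⟩
    · rintro w ⟨_, hxw⟩ w' ⟨_, hxw'⟩
      exact hxw.symm.trans hxw'
  have hcomp2 : IsCompOf G c0 A2' := by
    refine ⟨fun h => h.1 rfl, ⟨y, hy, SimpleGraph.Reachable.refl y⟩, ?_, ?_⟩
    · rintro w ⟨hwc, hxw⟩ y' hadj hy'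
      exact ⟨hy', hxw.trans (SimpleGraph.Adj.reachable ⟨hadj, hwc, hy'⟩)⟩
    · rintro w ⟨_, hxw⟩ w' ⟨_, hxw'⟩
      exact hxw.symm.trans hxw'
  have hdisj : Disjoint A1' A2' := by
    rw [Set.disjoint_left]
    rintro w ⟨_, hxw⟩ ⟨_, hyw⟩
    exact hxy (hxw.trans hyw.symm)
  obtain ⟨c1, A1, hA1, hA1sub, hA1nc⟩ := min_comp hconn ⟨c0, A1', hcomp1, subset_rfl⟩
  obtain ⟨c2, A2, hA2, hA2sub, hA2nc⟩ := min_comp hconn ⟨c0, A2', hcomp2, subset_rfl⟩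
  have hd : Disjoint A1 A2 := hdisj.mono hA1sub hA2sub
  have hsub : A1 ∪ A2 ⊆ {v : V | Noncritical G v} := by
    rintro w (hw | hw)
    · exact hA1nc w hw
    · exact hA2nc w hw
  have h1 : k ≤ A1.ncard := comp_size hdeg hA1
  have h2 : k ≤ A2.ncard := comp_size hdeg hA2
  have hu : (A1 ∪ A2).ncard = A1.ncard + A2.ncard :=
    Set.ncard_union_eq hd (Set.toFinite _) (Set.toFinite _)
  have hle : (A1 ∪ A2).ncard ≤ {v : V | Noncritical G v}.ncard :=
    Set.ncard_le_ncard hsub (Set.toFinite _)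
  omega
end

section
/- In a finite connected undirected graph, every maximal simple path ends at a noncritical vertex. That is, if p = (p_0, p_1, ..., p_k) is a simple path such that every neighbor of p_k lies in {p_0, ..., p_k}, then removing p_k and its incident edges leaves the graph connected. -/
open SimpleGraph Walk

theorem maximal_simple_path_ends_noncritical {V : Type*} [Fintype V]
    (G : SimpleGraph V) (hconn : G.Connected) (hcard : 2 ≤ Fintype.card V)
    (a b : V) (p : G.Walk a b) (hpath : p.IsPath)
    (hmax : ∀ w : V, G.Adj b w → w ∈ p.support) :
    (G.induce ({b}ᶜ : Set V)).Connected := by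
  classical
  set S : Set V := {b}ᶜ with hS
  have hmemS : ∀ v : V, v ≠ b → v ∈ S := fun v hv => hv
  -- a ≠ b
  have hab : a ≠ b := by
    rintro rfl
    have hnil := SimpleGraph.Walk.isPath_iff_eq_nil.mp hpath
    have : Nontrivial V := Fintype.one_lt_card_iff_nontrivial.mp (by omega)
    obtain ⟨c, hc⟩ := exists_ne a
    obtain ⟨w⟩ := hconn a c
    cases w with
    | nil => exact hc rfl
    | cons h q =>
      rename_i u
      have hu : u ∈ p.support := hmax u h
      rw [hnil] at hu
      simp at hu
      subst hu
      exact G.irrefl h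
  have haS : a ∈ S := hmemS a hab
  -- transfer a G-walk avoiding b into the induced graph
  have transfer : ∀ {x y : V} (w : G.Walk x y), b ∉ w.support →
      ∀ (hx : x ∈ S) (hy : y ∈ S), (G.induce S).Reachable ⟨x, hx⟩ ⟨y, hy⟩ := by
    intro x y w
    induction w with
    | nil => intro _ hx hy; rfl
    | @cons x u y h q ih =>
      intro hb hx hy
      have hbq : b ∉ q.support := fun hh => hb (by simp [hh])
      have huS : u ∈ S := hmemS u (by rintro rfl; exact hbq q.start_mem_support)
      have hadj : (G.induce S).Adj ⟨x, hx⟩ ⟨u, huS⟩ := by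
        simp [SimpleGraph.comap_adj, h]
      exact hadj.reachable.trans (ih hbq huS hy)
  -- any vertex on p other than b is reachable (in the induced graph) from a
  have reach_p : ∀ (v : V) (hv : v ∈ p.support) (hvb : v ≠ b),
      (G.induce S).Reachable ⟨a, haS⟩ ⟨v, hmemS v hvb⟩ := by
    intro v hv hvb
    refine transfer (p.takeUntil v hv) ?_ haS (hmemS v hvb)
    intro hbt
    have hspec := p.take_spec hv
    have hnodup : ((p.takeUntil v hv).support ++ (p.dropUntil v hv).support.tail).Nodup := by
      rw [← SimpleGraph.Walk.support_append, hspec]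
      exact hpath.support_nodup
    have hbd : b ∈ (p.dropUntil v hv).support := SimpleGraph.Walk.end_mem_support _
    rw [SimpleGraph.Walk.support_eq_cons] at hbd
    rcases List.mem_cons.mp hbd with hbd | hbd
    · exact hvb hbd.symm
    · exact (List.disjoint_of_nodup_append hnodup) hbt hbd
  -- every vertex ≠ b is reachable from a in the induced graph
  have reach2 : ∀ (n : ℕ) (x v : V) (hx : x ≠ b) (hv : v ≠ b) (w : G.Walk x v),
      w.length ≤ n → (G.induce S).Reachable ⟨x, hmemS x hx⟩ ⟨v, hmemS v hv⟩ := by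
    intro n
    induction n with
    | zero =>
      intro x v hx hv w hw
      have : x = v := by
        cases w with
        | nil => rfl
        | cons h q => simp at hw
      subst this; rfl
    | succ n ihn =>
      intro x v hx hv w hw
      cases w with
      | nil => rfl
      | @cons x u v h q =>
        by_cases hub : u = b
        · subst hub
          cases q with
          | nil => exact absurd rfl hv
          | @cons _ u' _ h' q' =>
            have hu'b : u' ≠ u := fun hh => G.irrefl (by rwa [hh] at h')
            have hx' : x ∈ p.support := hmax x h.symm
            have hu' : u' ∈ p.support := hmax u' h'
            have r1 : (G.induce S).Reachable ⟨x, hmemS x hx⟩ ⟨u', hmemS u' hu'b⟩ :=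
              (reach_p x hx' hx).symm.trans (reach_p u' hu' hu'b)
            have r2 := ihn u' v hu'b hv q' (by simp at hw; omega)
            exact r1.trans r2
        · have hadj : (G.induce S).Adj ⟨x, hmemS x hx⟩ ⟨u, hmemS u hub⟩ := by
            simp [SimpleGraph.comap_adj, h]
          exact hadj.reachable.trans (ihn u v hub hv q (by simp at hw; omega))
  have reach : ∀ (v : V) (hvb : v ≠ b),
      (G.induce S).Reachable ⟨a, haS⟩ ⟨v, hmemS v hvb⟩ := by
    intro v hvb
    obtain ⟨w⟩ := hconn a v
    exact reach2 w.length a v hab hvb w le_rfl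
  rw [SimpleGraph.connected_iff]
  refine ⟨?_, ⟨⟨a, haS⟩⟩⟩
  intro x y
  exact ((reach x.1 x.2).symm.trans (reach y.1 y.2))
end

section
/- If v is a δ-hop noncritical vertex of a connected graph G, then v is noncritical in G: the removal of v and its incident edges leaves G connected. -/
/-- `v` is δ-hop noncritical: the subgraph induced on the δ-neighborhood
of `v`, with `v` removed, is connected. -/
def DeltaNoncritical {V : Type*} (G : SimpleGraph V) (δ : ℕ) (v : V) : Prop :=
  (G.induce ({u : V | G.dist v u ≤ δ} \ {v})).Connected

theorem deltaNoncritical_imp_noncritical {V : Type*} [Fintype V]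
    (G : SimpleGraph V) (hconn : G.Connected) (δ : ℕ) (hδ : 1 ≤ δ)
    (v : V) (h : DeltaNoncritical G δ v) :
    (G.induce ({v}ᶜ : Set V)).Connected := by
  set S : Set V := {u : V | G.dist v u ≤ δ} \ {v} with hS
  have hsub : S ⊆ ({v}ᶜ : Set V) := fun u hu => hu.2
  have hmem : ∀ u : V, G.Adj v u → u ∈ S := by
    intro u hadj
    refine ⟨le_trans ?_ hδ, fun hu => G.ne_of_adj hadj (hu.symm)⟩
    calc G.dist v u ≤ hadj.toWalk.length := SimpleGraph.dist_le _
      _ = 1 := rfl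
  have hreachS : ∀ (a b : V) (ha : a ∈ S) (hb : b ∈ S),
      (G.induce ({v}ᶜ : Set V)).Reachable ⟨a, hsub ha⟩ ⟨b, hsub hb⟩ := by
    intro a b ha hb
    have := h.preconnected ⟨a, ha⟩ ⟨b, hb⟩
    exact this.map (G.induceHomOfLE hsub).toHom
  have key : ∀ (n : ℕ) (a b : V) (ha : a ≠ v) (hb : b ≠ v) (p : G.Walk a b),
      p.length ≤ n → (G.induce ({v}ᶜ : Set V)).Reachable ⟨a, ha⟩ ⟨b, hb⟩ := by
    intro n
    induction n with
    | zero =>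
      intro a b ha hb p hlen
      have : a = b := SimpleGraph.Walk.eq_of_length_eq_zero (Nat.le_zero.mp hlen)
      subst this; rfl
    | succ n ih =>
      intro a b ha hb p hlen
      cases p with
      | nil => rfl
      | cons hadj q =>
        rename_i c
        by_cases hc : c = v
        · cases q with
          | nil => exact absurd hc hb
          | cons hadj2 r =>
            rename_i d
            have hav : G.Adj v a := (hc ▸ hadj).symm
            have hvd : G.Adj v d := hc ▸ hadj2
            have hd : d ≠ v := (G.ne_of_adj hvd).symm
            have h1 : (G.induce ({v}ᶜ : Set V)).Reachable ⟨a, ha⟩ ⟨d, hd⟩ :=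
              hreachS a d (hmem a hav) (hmem d hvd)
            have h2 := ih d b hd hb r (by
              simp only [SimpleGraph.Walk.length_cons] at hlen; omega)
            exact h1.trans h2
        · have hstep : (G.induce ({v}ᶜ : Set V)).Adj ⟨a, ha⟩ ⟨c, hc⟩ := hadj
          have h2 := ih c b hc hb q (by
            simp only [SimpleGraph.Walk.length_cons] at hlen; omega)
          exact hstep.reachable.trans h2
  obtain ⟨⟨u, hu⟩⟩ := h.nonempty
  haveI : Nonempty ({v}ᶜ : Set V) := ⟨⟨u, hsub hu⟩⟩
  refine SimpleGraph.Connected.mk ?_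
  rintro ⟨a, ha⟩ ⟨b, hb⟩
  obtain ⟨p⟩ := hconn.preconnected a b
  exact key p.length a b ha hb p le_rfl
end

section
/- Let c_max be the length of the longest chordless cycle in a finite connected graph G, and suppose δ ≥ c_max / 2. Then every δ-hop critical vertex of G is a cut vertex of G. Equivalently, every noncritical vertex of G is δ-hop noncritical. -/
/-- A cycle is chordless if any two of its vertices that are adjacent in `G`
are joined by an edge of the cycle itself. -/
def IsChordlessCycle {V : Type*} (G : SimpleGraph V) {v : V} (c : G.Walk v v) : Prop :=
  c.IsCycle ∧ ∀ x y : V, x ∈ c.support → y ∈ c.support → G.Adj x y →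
    s(x, y) ∈ c.edges

open SimpleGraph Walk

namespace HopAux

variable {V : Type*} [DecidableEq V] {G : SimpleGraph V}

lemma reachable_induce_of_walk {s : Set V} {a b : V} (W : G.Walk a b)
    (hsup : ∀ z ∈ W.support, z ∈ s) (ha : a ∈ s) (hb : b ∈ s) :
    (G.induce s).Reachable ⟨a, ha⟩ ⟨b, hb⟩ := by
  induction W with
  | nil => exact Reachable.refl _
  | @cons a c b h W ih =>
    have hc : c ∈ s := hsup c (by simp)
    have h1 : (G.induce s).Adj ⟨a, ha⟩ ⟨c, hc⟩ := h
    exact h1.reachable.trans (ih (fun z hz => hsup z (by simp [hz])) hc hb)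

lemma edge_mem_of_length_one {x y : V} (S : G.Walk x y) (h : S.length = 1) :
    s(x, y) ∈ S.edges := by
  cases S with
  | nil => simp at h
  | @cons _ c _ h' S' =>
    have h0 : S'.length = 0 := by simpa using h
    have := Walk.eq_of_length_eq_zero h0
    subst this
    simp

/-- shortcut a walk along a chord `x–y` where `y` occurs after `x`. -/
lemma shortcut_after {a b x y : V} (P : G.Walk a b) (hx : x ∈ P.support)
    (hy : y ∈ (P.dropUntil x hx).support) (hxy : G.Adj x y) (hne : s(x, y) ∉ P.edges) :
    ∃ W : G.Walk a b, W.length < P.length ∧ ∀ z ∈ W.support, z ∈ P.support := by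
  set Q := P.takeUntil x hx with hQ
  set R := P.dropUntil x hx with hR
  have hspec : Q.append R = P := P.take_spec hx
  have hlenP : Q.length + R.length = P.length := by
    rw [← hspec, Walk.length_append]
  have hRy : (R.takeUntil y hy).length + (R.dropUntil y hy).length = R.length := by
    have := congrArg Walk.length (R.take_spec hy)
    rwa [Walk.length_append] at this
  have hxyne : x ≠ y := hxy.ne
  have h1 : 1 ≤ (R.takeUntil y hy).length := by
    by_contra h
    have h0 : (R.takeUntil y hy).length = 0 := by omega
    exact hxyne (Walk.eq_of_length_eq_zero h0)
  have h2 : (R.takeUntil y hy).length ≠ 1 := by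
    intro h
    exact hne (P.edges_dropUntil_subset hx (R.edges_takeUntil_subset hy
      (edge_mem_of_length_one _ h)))
  refine ⟨Q.append (Walk.cons hxy (R.dropUntil y hy)), ?_, ?_⟩
  · have : (Q.append (Walk.cons hxy (R.dropUntil y hy))).length
        = Q.length + ((R.dropUntil y hy).length + 1) := by
      rw [Walk.length_append, Walk.length_cons]
    omega
  · intro z hz
    rw [Walk.mem_support_append_iff] at hz
    rcases hz with hz | hz
    · exact P.support_takeUntil_subset hx hz
    · rw [Walk.support_cons] at hz
      rcases List.mem_cons.mp hz with rfl | hz'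
      · exact hx
      · exact P.support_dropUntil_subset hx (R.support_dropUntil_subset hy hz')

/-- shortcut a walk along a chord `x–y` where `y` occurs before `x`. -/
lemma shortcut_before {a b x y : V} (P : G.Walk a b) (hx : x ∈ P.support)
    (hy : y ∈ (P.takeUntil x hx).support) (hxy : G.Adj x y) (hne : s(x, y) ∉ P.edges) :
    ∃ W : G.Walk a b, W.length < P.length ∧ ∀ z ∈ W.support, z ∈ P.support := by
  set Q := P.takeUntil x hx with hQdef
  set R := P.dropUntil x hx with hRdef
  have hspec : Q.append R = P := P.take_spec hx
  have hlenP : Q.length + R.length = P.length := by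
    rw [← hspec, Walk.length_append]
  have hQy : (Q.takeUntil y hy).length + (Q.dropUntil y hy).length = Q.length := by
    have := congrArg Walk.length (Q.take_spec hy)
    rwa [Walk.length_append] at this
  have h1 : 1 ≤ (Q.dropUntil y hy).length := by
    by_contra h
    have h0 : (Q.dropUntil y hy).length = 0 := by omega
    exact hxy.ne' (Walk.eq_of_length_eq_zero h0)
  have h2 : (Q.dropUntil y hy).length ≠ 1 := by
    intro h
    have := edge_mem_of_length_one _ h
    rw [Sym2.eq_swap] at this
    exact hne (P.edges_takeUntil_subset hx (Q.edges_dropUntil_subset hy this))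
  refine ⟨(Q.takeUntil y hy).append (Walk.cons hxy.symm R), ?_, ?_⟩
  · have : ((Q.takeUntil y hy).append (Walk.cons hxy.symm R)).length
        = (Q.takeUntil y hy).length + (R.length + 1) := by
      rw [Walk.length_append, Walk.length_cons]
    omega
  · intro z hz
    rw [Walk.mem_support_append_iff] at hz
    rcases hz with hz | hz
    · exact P.support_takeUntil_subset hx (Q.support_takeUntil_subset hy hz)
    · rw [Walk.support_cons] at hz
      rcases List.mem_cons.mp hz with rfl | hz'
      · exact P.support_takeUntil_subset hx hy
      · exact P.support_dropUntil_subset hx hz'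

/-- shortcut a walk along a chord. -/
lemma shortcut {a b x y : V} (P : G.Walk a b) (hx : x ∈ P.support)
    (hy : y ∈ P.support) (hxy : G.Adj x y) (hne : s(x, y) ∉ P.edges) :
    ∃ W : G.Walk a b, W.length < P.length ∧ ∀ z ∈ W.support, z ∈ P.support := by
  have hy' : y ∈ ((P.takeUntil x hx).append (P.dropUntil x hx)).support := by
    rw [P.take_spec hx]; exact hy
  rw [Walk.mem_support_append_iff] at hy'
  rcases hy' with h | h
  · exact shortcut_before P hx h hxy hne
  · exact shortcut_after P hx h hxy hne

lemma adj_mem_ball {v a : V} {δ : ℕ} (hδ : 1 ≤ δ) (h : G.Adj v a) :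
    a ∈ {u : V | G.dist v u ≤ δ} \ {v} := by
  refine ⟨?_, ?_⟩
  · have h1 : G.dist v a ≤ h.toWalk.length := SimpleGraph.dist_le _
    simp only [Set.mem_setOf_eq]
    simp only [Walk.length_cons, Walk.length_nil] at h1
    omega
  · simp only [Set.mem_singleton_iff]
    exact h.ne'

lemma key {cmax δ : ℕ} (hδ : 1 ≤ δ)
    (hcmax : ∀ (v : V) (c : G.Walk v v), IsChordlessCycle G c → c.length ≤ cmax)
    (hhalf : cmax ≤ 2 * δ) (v : V) :
    ∀ (n : ℕ) (a b : V) (hva : G.Adj v a) (hvb : G.Adj v b) (W : G.Walk a b),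
      v ∉ W.support → W.length ≤ n →
      (G.induce ({u : V | G.dist v u ≤ δ} \ {v})).Reachable
        ⟨a, adj_mem_ball hδ hva⟩ ⟨b, adj_mem_ball hδ hvb⟩ := by
  intro n
  induction n using Nat.strong_induction_on with
  | _ n IH =>
  intro a b hva hvb W hvW hlen
  by_cases hab : a = b
  · subst hab
    exact Reachable.refl _
  have hP : W.bypass.IsPath := W.bypass_isPath
  have hPn : W.bypass.length ≤ n := le_trans W.length_bypass_le hlen
  have hvP : v ∉ W.bypass.support := fun h => hvW (W.support_bypass_subset h)
  set P := W.bypass with hPdef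
  clear_value P
  clear hPdef hvW hlen W
  by_cases hsplit : ∃ p ∈ P.support, p ≠ a ∧ p ≠ b ∧ G.Adj v p
  · obtain ⟨p, hp, hpa, hpb, hvp⟩ := hsplit
    have hspec := congrArg Walk.length (P.take_spec hp)
    rw [Walk.length_append] at hspec
    have hQ1 : 1 ≤ (P.takeUntil p hp).length := by
      by_contra h
      have h0 : (P.takeUntil p hp).length = 0 := by omega
      exact hpa (Walk.eq_of_length_eq_zero h0).symm
    have hR1 : 1 ≤ (P.dropUntil p hp).length := by
      by_contra h
      have h0 : (P.dropUntil p hp).length = 0 := by omega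
      exact hpb (Walk.eq_of_length_eq_zero h0)
    have r1 := IH (P.takeUntil p hp).length (by omega) a p hva hvp (P.takeUntil p hp)
      (fun h => hvP (P.support_takeUntil_subset hp h)) le_rfl
    have r2 := IH (P.dropUntil p hp).length (by omega) p b hvp hvb (P.dropUntil p hp)
      (fun h => hvP (P.support_dropUntil_subset hp h)) le_rfl
    exact r1.trans r2
  by_cases hchord : ∃ x ∈ P.support, ∃ y ∈ P.support, G.Adj x y ∧ s(x, y) ∉ P.edges
  · obtain ⟨x, hx, y, hy, hxy, hne⟩ := hchord
    obtain ⟨W', hlt, hsub⟩ := shortcut P hx hy hxy hne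
    exact IH W'.length (by omega) a b hva hvb W' (fun h => hvP (hsub _ h)) le_rfl
  push_neg at hsplit hchord
  have hbv : G.Adj b v := hvb.symm
  have hPc : (P.concat hbv).IsPath := by
    rw [Walk.isPath_def, Walk.support_concat]
    rw [List.nodup_append']
    refine ⟨hP.support_nodup, List.nodup_singleton v, ?_⟩
    intro z hz hz'
    rw [List.mem_singleton] at hz'
    subst hz'
    exact hvP hz
  have hCcyc : (Walk.cons hva (P.concat hbv)).IsCycle := by
    rw [Walk.cons_isCycle_iff]
    refine ⟨hPc, ?_⟩
    rw [Walk.edges_concat, List.concat_eq_append]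
    intro hmem
    rcases List.mem_append.mp hmem with h | h
    · exact hvP (P.fst_mem_support_of_mem_edges h)
    · rw [List.mem_singleton, Sym2.eq_iff] at h
      rcases h with ⟨h1, h2⟩ | ⟨h1, h2⟩
      · exact hva.ne' h2
      · exact hab h2
  have hChord : IsChordlessCycle G (Walk.cons hva (P.concat hbv)) := by
    refine ⟨hCcyc, ?_⟩
    have hsup : ∀ z, z ∈ (Walk.cons hva (P.concat hbv)).support → z = v ∨ z ∈ P.support := by
      intro z hz
      rw [Walk.support_cons, Walk.support_concat] at hz
      rcases List.mem_cons.mp hz with h | h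
      · exact Or.inl h
      · rcases List.mem_append.mp h with h | h
        · exact Or.inr h
        · exact Or.inl (List.mem_singleton.mp h)
    have hedgeP : ∀ e ∈ P.edges, e ∈ (Walk.cons hva (P.concat hbv)).edges := by
      intro e he
      rw [Walk.edges_cons, Walk.edges_concat, List.concat_eq_append]
      exact List.mem_cons_of_mem _ (List.mem_append_left _ he)
    have hea : s(v, a) ∈ (Walk.cons hva (P.concat hbv)).edges := by
      rw [Walk.edges_cons]
      exact List.mem_cons_self
    have heb : s(b, v) ∈ (Walk.cons hva (P.concat hbv)).edges := by
      rw [Walk.edges_cons, Walk.edges_concat, List.concat_eq_append]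
      exact List.mem_cons_of_mem _ (List.mem_append_right _ (List.mem_singleton_self _))
    have hnbr : ∀ y ∈ P.support, G.Adj v y → s(v, y) ∈ (Walk.cons hva (P.concat hbv)).edges := by
      intro y hy hvy
      by_cases hya : y = a
      · subst hya; exact hea
      by_cases hyb : y = b
      · subst hyb
        rw [Sym2.eq_swap]
        exact heb
      · exact absurd hvy (hsplit y hy hya hyb)
    intro x y hx hy hxy
    rcases hsup x hx with rfl | hx' <;> rcases hsup y hy with rfl | hy'
    · exact absurd rfl hxy.ne
    · exact hnbr y hy' hxy
    · rw [Sym2.eq_swap]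
      exact hnbr x hx' hxy.symm
    · exact hedgeP _ (hchord x hx' y hy' hxy)
  have hlenC : P.length + 2 ≤ 2 * δ := by
    have h2 := le_trans (hcmax v _ hChord) hhalf
    rw [Walk.length_cons, Walk.length_concat] at h2
    omega
  have hmem : ∀ z ∈ P.support, z ∈ {u : V | G.dist v u ≤ δ} \ {v} := by
    intro z hz
    have hspec := congrArg Walk.length (P.take_spec hz)
    rw [Walk.length_append] at hspec
    have h1 : G.dist v z ≤ (P.takeUntil z hz).length + 1 := by
      have := SimpleGraph.dist_le (Walk.cons hva (P.takeUntil z hz))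
      rw [Walk.length_cons] at this
      omega
    have h2 : G.dist v z ≤ (P.dropUntil z hz).length + 1 := by
      have := SimpleGraph.dist_le ((P.dropUntil z hz).concat hbv)
      rw [Walk.length_concat] at this
      rw [G.dist_comm]
      exact this
    refine ⟨?_, ?_⟩
    · simp only [Set.mem_setOf_eq]
      omega
    · simp only [Set.mem_singleton_iff]
      intro h
      exact hvP (h ▸ hz)
  exact reachable_induce_of_walk P hmem _ _

end HopAux

theorem deltaCritical_imp_cut {V : Type*} [Fintype V]
    (G : SimpleGraph V) (hconn : G.Connected)
    (cmax δ : ℕ) (hδ : 1 ≤ δ)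
    (hcmax : ∀ (v : V) (c : G.Walk v v), IsChordlessCycle G c → c.length ≤ cmax)
    (hhalf : cmax ≤ 2 * δ) (v : V)
    (hnoncrit : (G.induce ({v}ᶜ : Set V)).Connected) :
    DeltaNoncritical G δ v := by
  classical
  obtain ⟨⟨u0, hu0⟩⟩ := hnoncrit.nonempty
  have hu0v : u0 ≠ v := hu0
  obtain ⟨Wvu⟩ := hconn.preconnected v u0
  obtain ⟨a0, hva0⟩ : ∃ a, G.Adj v a := by
    cases Wvu with
    | nil => exact absurd rfl hu0v
    | cons h _ => exact ⟨_, h⟩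
  have ha0B : a0 ∈ {u : V | G.dist v u ≤ δ} \ {v} := HopAux.adj_mem_ball hδ hva0
  have hnbr : ∀ (a : V) (hva : G.Adj v a),
      (G.induce ({u : V | G.dist v u ≤ δ} \ {v})).Reachable
        ⟨a, HopAux.adj_mem_ball hδ hva⟩ ⟨a0, ha0B⟩ := by
    intro a hva
    have haC : a ∈ ({v}ᶜ : Set V) := hva.ne'
    have ha0C : a0 ∈ ({v}ᶜ : Set V) := hva0.ne'
    obtain ⟨W2⟩ := hnoncrit.preconnected ⟨a, haC⟩ ⟨a0, ha0C⟩
    have hvW3 : v ∉ (W2.map (SimpleGraph.Embedding.induce ({v}ᶜ : Set V)).toHom).support := by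
      intro h
      rw [SimpleGraph.Walk.support_map, List.mem_map] at h
      obtain ⟨z, hz, hzv⟩ := h
      exact z.2 (by simpa using hzv)
    exact HopAux.key hδ hcmax hhalf v _ a a0 hva hva0 _ hvW3 le_rfl
  have hmain : ∀ (u : V) (hu : u ∈ {u : V | G.dist v u ≤ δ} \ {v}),
      (G.induce ({u : V | G.dist v u ≤ δ} \ {v})).Reachable ⟨u, hu⟩ ⟨a0, ha0B⟩ := by
    intro u hu
    have huv : u ≠ v := by
      have := hu.2
      simpa using this
    have hdu : G.dist v u ≤ δ := hu.1
    obtain ⟨W, hWlen⟩ := (hconn.preconnected v u).exists_walk_length_eq_dist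
    have hlP : W.bypass.length ≤ δ := le_trans W.length_bypass_le (by rw [hWlen]; exact hdu)
    have hP : W.bypass.IsPath := W.bypass_isPath
    have hmem : ∀ z ∈ W.bypass.support, G.dist v z ≤ δ := by
      intro z hz
      have h1 := SimpleGraph.dist_le (W.bypass.takeUntil z hz)
      have hle := W.bypass.length_takeUntil_le hz
      omega
    set P := W.bypass with hPdef
    clear_value P
    clear hPdef hlP hWlen W
    cases P with
    | nil => exact absurd rfl huv.symm
    | @cons _ c _ h P' =>
      rw [SimpleGraph.Walk.cons_isPath_iff] at hP
      have hvP' : v ∉ P'.support := hP.2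
      have hmem' : ∀ z ∈ P'.support, z ∈ {u : V | G.dist v u ≤ δ} \ {v} := by
        intro z hz
        refine ⟨hmem z (by simp [hz]), ?_⟩
        simp only [Set.mem_singleton_iff]
        intro hzz
        exact hvP' (hzz ▸ hz)
      have hr := HopAux.reachable_induce_of_walk P' hmem'
        (hmem' c P'.start_mem_support) (hmem' u P'.end_mem_support)
      exact hr.symm.trans (hnbr c h)
  rw [DeltaNoncritical, SimpleGraph.connected_iff]
  refine ⟨?_, ⟨⟨a0, ha0B⟩⟩⟩
  rintro ⟨x, hx⟩ ⟨y, hy⟩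
  exact (hmain x hx).trans (hmain y hy).symm
end

section
/- If a finite connected graph G contains no cycles (i.e., G is a tree), then for every δ ≥ 1, every δ-hop critical vertex of G is a cut vertex of G. -/
open SimpleGraph

/-- A walk whose support lies in `S` gives reachability in the induced graph. -/
lemma reach_induce_aux {V : Type*} (G : SimpleGraph V) (S : Set V) {a b : V}
    (q : G.Walk a b) (hq : ∀ x ∈ q.support, x ∈ S) :
    (G.induce S).Reachable ⟨a, hq a q.start_mem_support⟩ ⟨b, hq b q.end_mem_support⟩ := by
  induction q with
  | nil => exact Reachable.refl _
  | @cons a c b h q ih =>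
    have hc : c ∈ S := hq c (by simp)
    have hq' : ∀ x ∈ q.support, x ∈ S := fun x hx => hq x (by simp [hx])
    have h1 : (G.induce S).Adj ⟨a, hq a (Walk.cons h q).start_mem_support⟩ ⟨c, hc⟩ := by
      simpa using h
    exact h1.reachable.trans (ih hq')

theorem tree_deltaCritical_imp_cut {V : Type*} [Fintype V]
    (G : SimpleGraph V) (htree : G.IsTree) (δ : ℕ) (hδ : 1 ≤ δ)
    (v : V) (hcrit : ¬ DeltaNoncritical G δ v) :
    ¬ (G.induce ({v}ᶜ : Set V)).Connected := by
  intro h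
  apply hcrit
  classical
  have hconn : G.Connected := htree.isConnected
  set S : Set V := {u : V | G.dist v u ≤ δ} \ {v} with hS
  -- there is a vertex other than v
  obtain ⟨⟨u0, hu0⟩⟩ := h.nonempty
  have hu0v : u0 ≠ v := hu0
  -- v has a neighbor w
  obtain ⟨p0⟩ := hconn v u0
  have hw : ∃ w, G.Adj v w := by
    cases p0 with
    | nil => exact absurd rfl hu0v.symm
    | cons h' _ => exact ⟨_, h'⟩
  obtain ⟨w, hvw⟩ := hw
  have hwS : w ∈ S := by
    constructor
    · exact le_trans (dist_le (Walk.cons hvw Walk.nil)) (by simpa using hδ)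
    · exact fun hwv => G.loopless.irrefl v (by simpa [Set.mem_singleton_iff.mp hwv] using hvw)
  -- key: every neighbor of v equals w
  have huniq : ∀ w', G.Adj v w' → w' = w := by
    intro w' hvw'
    have hw'ne : w' ≠ v := fun h' => G.loopless.irrefl v (h' ▸ hvw')
    have hwne : w ≠ v := fun h' => G.loopless.irrefl v (h' ▸ hvw)
    obtain ⟨r0⟩ := h.preconnected ⟨w', hw'ne⟩ ⟨w, hwne⟩
    -- map to a walk in G avoiding v, take the underlying path
    let r1 : G.Walk w' w := r0.map (SimpleGraph.Embedding.induce ({v}ᶜ : Set V)).toHom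
    have hr1 : v ∉ r1.support := by
      intro hv
      rw [show r1.support = (r0.map (SimpleGraph.Embedding.induce ({v}ᶜ : Set V)).toHom).support from rfl, Walk.support_map, List.mem_map] at hv
      obtain ⟨⟨x, hx⟩, _, hx2⟩ := hv
      exact hx (by simpa using hx2)
    have hr2 : v ∉ r1.bypass.support := fun hv => hr1 (r1.support_bypass_subset hv)
    have hpath : (Walk.cons hvw' r1.bypass).IsPath := by
      rw [Walk.cons_isPath_iff]
      exact ⟨r1.bypass_isPath, hr2⟩
    have hpath' : (Walk.cons hvw Walk.nil : G.Walk v w).IsPath := Walk.IsPath.cons (Walk.IsPath.nil) (by simp [hwne.symm])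
    have := htree.existsUnique_path v w
    obtain ⟨q, -, hq⟩ := this
    have e1 := hq _ hpath
    have e2 := hq _ hpath'
    have e3 : Walk.cons hvw' r1.bypass = (Walk.cons hvw Walk.nil : G.Walk v w) :=
      e1.trans e2.symm
    -- extract w' = w from equality of cons walks
    have hsup := congrArg Walk.support e3
    rw [Walk.support_cons, Walk.support_cons, Walk.support_nil,
      Walk.support_eq_cons r1.bypass] at hsup
    simp only [List.cons.injEq] at hsup
    exact hsup.2.1
  -- now prove connectivity of the induced ball minus v
  rw [DeltaNoncritical, ← hS, connected_iff]
  refine ⟨?_, ⟨⟨w, hwS⟩⟩⟩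
  · -- every vertex of S reaches ⟨w, hwS⟩
    have key : ∀ (u : V) (hu : u ∈ S), (G.induce S).Reachable ⟨u, hu⟩ ⟨w, hwS⟩ := by
      intro u hu
      have huδ : G.dist v u ≤ δ := hu.1
      have huv : u ≠ v := hu.2
      obtain ⟨p, hp⟩ := (hconn v u).exists_walk_length_eq_dist
      -- replace by a path of the same (minimal) length
      have hbl : p.bypass.length = G.dist v u :=
        le_antisymm (hp ▸ p.length_bypass_le) (dist_le p.bypass)
      have hbp : p.bypass.IsPath := p.bypass_isPath
      set q := p.bypass with hqdef
      clear_value q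
      cases q with
      | nil => exact absurd rfl huv.symm
      | @cons _ c _ h' t =>
        -- c is a neighbor of v, so c = w
        have hcw : c = w := huniq c h'
        have hvt : v ∉ t.support := by
          have := hbp.support_nodup
          simp only [Walk.support_cons, List.nodup_cons] at this
          exact this.1
        -- all vertices of t are in S
        have htS : ∀ x ∈ t.support, x ∈ S := by
          intro x hx
          have hxv : x ≠ v := fun hxe => hvt (hxe ▸ hx)
          have hxsup : x ∈ (Walk.cons h' t).support := by simp [hx]
          refine ⟨?_, hxv⟩
          have h1 : G.dist v x ≤ ((Walk.cons h' t).takeUntil x hxsup).length :=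
            dist_le _
          have h2 : ((Walk.cons h' t).takeUntil x hxsup).length ≤ (Walk.cons h' t).length :=
            Walk.length_takeUntil_le _ hxsup
          calc G.dist v x ≤ (Walk.cons h' t).length := le_trans h1 h2
            _ = G.dist v u := hbl
            _ ≤ δ := huδ
        have hr := reach_induce_aux G S t htS
        subst hcw
        exact hr.symm
    intro a b
    exact (key a.1 (by simpa using a.2)).trans (key b.1 (by simpa using b.2)).symm
end
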